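/- Let T₁,…,T_m : [0,1] → [0,1] be contraction maps whose images cover [0,1], i.e. [0,1] = ⋃ᵢ Tᵢ([0,1]), let S₁,…,S_m : ℝⁿ → ℝⁿ be contraction maps, and let f : [0,1] → ℝⁿ be a continuous map satisfying f(Tᵢ(t)) = Sᵢ(f(t)) for every i ∈ {1,…,m} and every t ∈ [0,1]. Define Wᵢ : ℝ × ℝⁿ → ℝ × ℝⁿ by Wᵢ(t,x) = (Tᵢ(t), Sᵢ(x)). Then the graph Γ = {(t, f(t)) : t ∈ [0,1]} is a nonempty compact subset of ℝ × ℝⁿ satisfying Γ = ⋃_{i=1}^m Wᵢ(Γ); moreover each Wᵢ is a contraction of ℝ × ℝⁿ (with the sup-product metric, with Lipschitz constant the maximum of the constants of Tᵢ and Sᵢ), so Γ is the unique nonempty compact set invariant under the system {W₁,…,W_m}. -/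

import Mathlib

open scoped ENNReal NNReal


/-- **Proposition 1 (attractor part).**
Let `T₁,…,T_m : [0,1] → [0,1]` be contraction maps whose images cover `[0,1]`,
let `S₁,…,S_m : ℝⁿ → ℝⁿ` be contraction maps, and let `f : [0,1] → ℝⁿ` be continuous
with `f (Tᵢ t) = Sᵢ (f t)` for all `i`, `t`.  With `Wᵢ (t, x) = (Tᵢ t, Sᵢ x)` on the
product `[0,1] × ℝⁿ` (with the sup-product metric), the graph `Γ = {(t, f t)}` is a
nonempty compact set with `Γ = ⋃ᵢ Wᵢ '' Γ`; each `Wᵢ` is Lipschitz with constant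
`max (KTᵢ) (KSᵢ) < 1`, and `Γ` is the unique nonempty compact invariant set. -/
theorem stmt0 (n m : ℕ)
    (T : Fin m → Set.Icc (0:ℝ) 1 → Set.Icc (0:ℝ) 1)
    (KT : Fin m → NNReal) (hKT : ∀ i, KT i < 1)
    (hTlip : ∀ i, LipschitzWith (KT i) (T i))
    (hcover : (Set.univ : Set (Set.Icc (0:ℝ) 1)) = ⋃ i, Set.range (T i))
    (S : Fin m → EuclideanSpace ℝ (Fin n) → EuclideanSpace ℝ (Fin n))
    (KS : Fin m → NNReal) (hKS : ∀ i, KS i < 1)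
    (hSlip : ∀ i, LipschitzWith (KS i) (S i))
    (f : Set.Icc (0:ℝ) 1 → EuclideanSpace ℝ (Fin n))
    (hf : Continuous f)
    (hconj : ∀ i t, f (T i t) = S i (f t))
    (W : Fin m → Set.Icc (0:ℝ) 1 × EuclideanSpace ℝ (Fin n) →
          Set.Icc (0:ℝ) 1 × EuclideanSpace ℝ (Fin n))
    (hW : ∀ i p, W i p = (T i p.1, S i p.2))
    (Γ : Set (Set.Icc (0:ℝ) 1 × EuclideanSpace ℝ (Fin n)))
    (hΓ : Γ = Set.range (fun t => (t, f t))) :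
    Γ.Nonempty ∧ IsCompact Γ ∧ Γ = ⋃ i, W i '' Γ ∧
    (∀ i, LipschitzWith (max (KT i) (KS i)) (W i) ∧ max (KT i) (KS i) < 1) ∧
    (∀ K : Set (Set.Icc (0:ℝ) 1 × EuclideanSpace ℝ (Fin n)),
        K.Nonempty → IsCompact K → K = ⋃ i, W i '' K → K = Γ) := by
  have h0 : (⟨0, by norm_num⟩ : Set.Icc (0:ℝ) 1) ∈ (Set.univ : Set (Set.Icc (0:ℝ) 1)) :=
    Set.mem_univ _
  -- Nonempty
  have hne : Γ.Nonempty := by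
    rw [hΓ]; exact ⟨_, ⟨⟨0, by norm_num⟩, rfl⟩⟩
  -- Compact
  have hcomp : IsCompact Γ := by
    rw [hΓ]
    exact isCompact_range (continuous_id.prodMk hf)
  -- Invariance
  have hinv : Γ = ⋃ i, W i '' Γ := by
    apply Set.Subset.antisymm
    · rintro p hp
      rw [hΓ] at hp
      obtain ⟨t, rfl⟩ := hp
      have : t ∈ ⋃ i, Set.range (T i) := by rw [← hcover]; exact Set.mem_univ t
      obtain ⟨i, hi⟩ := Set.mem_iUnion.1 this
      obtain ⟨s, rfl⟩ := hi
      refine Set.mem_iUnion.2 ⟨i, (s, f s), by rw [hΓ]; exact ⟨s, rfl⟩, ?_⟩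
      rw [hW]
      simp [hconj i s]
    · rintro p hp
      obtain ⟨i, q, hq, rfl⟩ := Set.mem_iUnion.1 hp
      rw [hΓ] at hq ⊢
      obtain ⟨s, rfl⟩ := hq
      exact ⟨T i s, by rw [hW]; simp [hconj i s]⟩
  -- Lipschitz
  have hWlip : ∀ i, LipschitzWith (max (KT i) (KS i)) (W i) := by
    intro i
    have hWeq : W i = fun p => (T i p.1, S i p.2) := funext (hW i)
    rw [hWeq]
    intro p q
    simp only [Prod.edist_eq]
    apply max_le
    · calc edist (T i p.1) (T i q.1) ≤ KT i * edist p.1 q.1 := hTlip i p.1 q.1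
        _ ≤ (max (KT i) (KS i) : NNReal) * max (edist p.1 q.1) (edist p.2 q.2) := by
            gcongr
            · exact_mod_cast le_max_left _ _
            · exact le_max_left _ _
    · calc edist (S i p.2) (S i q.2) ≤ KS i * edist p.2 q.2 := hSlip i p.2 q.2
        _ ≤ (max (KT i) (KS i) : NNReal) * max (edist p.1 q.1) (edist p.2 q.2) := by
            gcongr
            · exact_mod_cast le_max_right _ _
            · exact le_max_right _ _
  refine ⟨hne, hcomp, hinv, fun i => ⟨hWlip i, max_lt (hKT i) (hKS i)⟩, ?_⟩
  -- Uniqueness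
  intro K hKne hKcomp hKinv
  set r : NNReal := Finset.univ.sup (fun i => max (KT i) (KS i)) with hr
  have hr1 : r < 1 := by
    rw [hr]
    apply Finset.sup_lt_iff (by norm_num) |>.2
    intro i _
    exact max_lt (hKT i) (hKS i)
  set D := EMetric.hausdorffEdist K Γ with hD
  have hDtop : D ≠ ⊤ :=
    Metric.hausdorffEdist_ne_top_of_nonempty_of_bounded hKne hne hKcomp.isBounded
      hcomp.isBounded
  -- key estimate: D ≤ r * D
  have key : D ≤ (r : ℝ≥0∞) * D := by
    apply EMetric.hausdorffEdist_le_of_mem_edist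
    · intro x hx
      rw [hKinv] at hx
      obtain ⟨i, y, hy, rfl⟩ := Set.mem_iUnion.1 hx
      obtain ⟨z, hz, hdz⟩ := hcomp.exists_infEdist_eq_edist hne y
      refine ⟨W i z, ?_, ?_⟩
      · rw [hinv]; exact Set.mem_iUnion.2 ⟨i, z, hz, rfl⟩
      · calc edist (W i y) (W i z) ≤ (max (KT i) (KS i) : ℝ≥0∞) * edist y z := hWlip i y z
          _ ≤ (r : ℝ≥0∞) * D := by
              gcongr
              · exact_mod_cast Finset.le_sup (f := fun j => KT j ⊔ KS j) (Finset.mem_univ i)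
              · rw [← hdz]
                exact EMetric.infEdist_le_hausdorffEdist_of_mem hy
    · intro x hx
      rw [hinv] at hx
      obtain ⟨i, y, hy, rfl⟩ := Set.mem_iUnion.1 hx
      obtain ⟨z, hz, hdz⟩ := hKcomp.exists_infEdist_eq_edist hKne y
      refine ⟨W i z, ?_, ?_⟩
      · rw [hKinv]; exact Set.mem_iUnion.2 ⟨i, z, hz, rfl⟩
      · calc edist (W i y) (W i z) ≤ (max (KT i) (KS i) : ℝ≥0∞) * edist y z := hWlip i y z
          _ ≤ (r : ℝ≥0∞) * D := by
              gcongr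
              · exact_mod_cast Finset.le_sup (f := fun j => KT j ⊔ KS j) (Finset.mem_univ i)
              · rw [← hdz]
                calc EMetric.infEdist y K ≤ EMetric.hausdorffEdist Γ K :=
                      EMetric.infEdist_le_hausdorffEdist_of_mem hy
                  _ = D := EMetric.hausdorffEdist_comm
  have hD0 : D = 0 := by
    by_contra hD0
    have : (r : ℝ≥0∞) * D < 1 * D :=
      by
        have h := ENNReal.mul_lt_mul_right hD0 hDtop (show (r : ℝ≥0∞) < 1 by exact_mod_cast hr1)
        rwa [mul_comm D, mul_comm D] at h
    rw [one_mul] at this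
    exact absurd key (not_le.2 this)
  exact (EMetric.hausdorffEdist_zero_iff_eq_of_closed hKcomp.isClosed hcomp.isClosed).1 hD0
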